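/- Correctness of set-automaton evaluation: for every closed term t, eval_M(s₀, ε) = {ℓ@p : ℓ ∈ L, p ∈ D(t), ℓ matches t at p}, where eval_M(s,p) = {ℓ@p.q : ℓ@q ∈ out(s, hd(t[p.L(s)]))} ∪ ⋃_{(s',p.p') ∈ suc(s,p)} eval_M(s',p.p'). -/

import Mathlib

/-- A position is a finite list of positive natural numbers. -/
abbrev Pos : Type := List ℕ+

/-- `below p q` (written `p ≤ q` in the paper) holds iff `q` is a prefix of `p`. -/
def below (p q : Pos) : Prop := ∃ q'' : Pos, p = q ++ q''

/-- Terms over a signature `F`, with a single variable `ω` (patterns are linear). -/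
inductive Tm (F : Type) : Type
  | var : Tm F
  | app : F → List (Tm F) → Tm F

variable {F : Type}

/-- Head symbol of a term (none for the variable). -/
def hd : Tm F → Option F
  | .var => none
  | .app f _ => some f

/-- The subterm of `t` at position `p`, if `p` is in the domain of `t`. -/
def subtermAt : Tm F → Pos → Option (Tm F)
  | t, [] => some t
  | .var, _ :: _ => none
  | .app _ ts, i :: p => (ts[(i : ℕ) - 1]?).bind (fun u => subtermAt u p)

/-- The domain (set of positions) of a term. -/
def Dom (t : Tm F) : Set Pos := {p | (subtermAt t p).isSome}

/-- `t` is a closed term: it contains no variable. -/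
def Closed (t : Tm F) : Prop := ∀ p u, subtermAt t p = some u → u ≠ Tm.var

/-- Terms that respect the arity function of the signature. -/
inductive WF (ar : F → ℕ) : Tm F → Prop
  | var : WF ar Tm.var
  | app : ∀ f ts, ts.length = ar f → (∀ u ∈ ts, WF ar u) → WF ar (Tm.app f ts)

/-- Pattern `ℓ` matches term `t` at position `p`: for every non-variable
position `p'` of `ℓ`, the head symbols of `t[p.p']` and `ℓ[p']` agree. -/
def Matches (ℓ t : Tm F) (p : Pos) : Prop :=
  ∀ p' u, subtermAt ℓ p' = some u → u ≠ Tm.var →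
    ∃ v, subtermAt t (p ++ p') = some v ∧ hd v = hd u

/-- A match obligation: a set of (subpattern, position) pairs. -/
abbrev Obl (F : Type) := Set (Tm F × Pos)
/-- A match goal: a match obligation together with a match announcement. -/
abbrev Goal (F : Type) := Obl F × (Tm F × Pos)
/-- A state of the set automaton: a set of match goals. -/
abbrev St (F : Type) := Set (Goal F)

/-- The positions of a match obligation. -/
def posOf (mo : Obl F) : Set Pos := {p | ∃ u, (u, p) ∈ mo}

/-- All match obligation positions of a state. -/
def posMO (s : St F) : Set Pos := {p | ∃ g ∈ s, p ∈ posOf g.1}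

/-- Reduction of a match obligation after observing a symbol of arity `n`
at position `p`: pairs at other positions are kept, and the pair at `p` is
replaced by obligations for its non-variable arguments. -/
def reduce (mo : Obl F) (n : ℕ) (p : Pos) : Obl F :=
  {x | x ∈ mo ∧ x.2 ≠ p} ∪
  {x | ∃ (ℓ u : Tm F) (i : ℕ+), (ℓ, p) ∈ mo ∧ (i : ℕ) ≤ n ∧
        subtermAt ℓ [i] = some u ∧ u ≠ Tm.var ∧ x = (u, p ++ [i])}

/-- The `f`-derivative of state `s` labelled with position `lab`:
unchanged goals, reduced goals and fresh goals. -/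
def derivS (pats : Set (Tm F)) (ar : F → ℕ) (s : St F) (lab : Pos) (f : F) : St F :=
  {g | g ∈ s ∧ lab ∉ posOf g.1} ∪
  {g | ∃ mo ma, (mo, ma) ∈ s ∧ (∃ ℓ, (ℓ, lab) ∈ mo ∧ hd ℓ = some f) ∧
        reduce mo (ar f) lab ≠ ∅ ∧ g = (reduce mo (ar f) lab, ma)} ∪
  {g | ∃ (ℓ : Tm F) (i : ℕ+), ℓ ∈ pats ∧ (i : ℕ) ≤ ar f ∧
        g = ({(ℓ, lab ++ [i])}, (ℓ, lab ++ [i]))}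

/-- The direct dependency relation: the obligation position sets intersect. -/
def dirDep (g₁ g₂ : Goal F) : Prop := (posOf g₁.1 ∩ posOf g₂.1).Nonempty

/-- `K` is an equivalence class of `X` under the transitive closure of the
direct dependency relation restricted to `X`. -/
def IsClass (X K : St F) : Prop :=
  ∃ g ∈ X, K = {g' | g' ∈ X ∧
    Relation.ReflTransGen (fun a b => a ∈ X ∧ b ∈ X ∧ dirDep a b) g g'}

/-- The match announcement positions of a set of goals. -/
def posMA (K : St F) : Set Pos := {p | ∃ mo ℓ, (mo, (ℓ, p)) ∈ K}

/-- `g` is the greatest common prefix (join) of the set of positions `P`. -/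
def IsGcp (P : Set Pos) (g : Pos) : Prop :=
  (∀ p ∈ P, below p g) ∧ ∀ r : Pos, (∀ p ∈ P, below p r) → below g r

/-- Lift a match goal by stripping the common prefix `g` from all positions. -/
def liftGoal (g : Pos) (x : Goal F) : Goal F :=
  ((fun y : Tm F × Pos => (y.1, y.2.drop g.length)) '' x.1,
   (x.2.1, x.2.2.drop g.length))

/-- Lift a set of match goals. -/
def liftSt (g : Pos) (K : St F) : St F := liftGoal g '' K

/-- The transition function of the set automaton: `(s', p') ∈ delta pats ar L s f`
iff `s'` is the lifting of a dependency class `K` of the derivative and `p'` is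
the greatest common prefix of the announcement positions of `K`. -/
def delta (pats : Set (Tm F)) (ar : F → ℕ) (L : St F → Pos) (s : St F) (f : F) :
    Set (St F × Pos) :=
  {x | ∃ K, IsClass (derivS pats ar s (L s) f) K ∧ IsGcp (posMA K) x.2 ∧
        x.1 = liftSt x.2 K}

/-- The initial state: all fresh root goals. -/
def initSt (pats : Set (Tm F)) : St F :=
  {g | ∃ ℓ ∈ pats, g = ({(ℓ, ([] : Pos))}, (ℓ, ([] : Pos)))}

/-- Reachable states of the set automaton. -/
inductive Reachable (pats : Set (Tm F)) (ar : F → ℕ) (L : St F → Pos) : St F → Prop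
  | init : Reachable pats ar L (initSt pats)
  | step : ∀ s f s' p, Reachable pats ar L s →
      (s', p) ∈ delta pats ar L s f → Reachable pats ar L s'

/-- The labelling function `L` picks, for every reachable state, an obligation
position of one of its root goals. -/
def RootLabel (pats : Set (Tm F)) (ar : F → ℕ) (L : St F → Pos) : Prop :=
  ∀ s, Reachable pats ar L s →
    ∃ mo ℓ, (mo, (ℓ, ([] : Pos))) ∈ s ∧ L s ∈ posOf mo

/-- The nodes of the evaluation tree `ET_M(t)`. -/
inductive Node (pats : Set (Tm F)) (ar : F → ℕ) (L : St F → Pos) (t : Tm F) :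
    St F → Pos → Prop
  | root : Node pats ar L t (initSt pats) []
  | step : ∀ s p f s' p', Node pats ar L t s p →
      (∃ v, subtermAt t (p ++ L s) = some v ∧ hd v = some f) →
      (s', p') ∈ delta pats ar L s f →
      Node pats ar L t s' (p ++ p')

/-- The edges of the evaluation tree `ET_M(t)`. -/
def EdgeRel (pats : Set (Tm F)) (ar : F → ℕ) (L : St F → Pos) (t : Tm F)
    (s : St F) (p : Pos) (s' : St F) (q : Pos) : Prop :=
  Node pats ar L t s p ∧ ∃ f p',
    (∃ v, subtermAt t (p ++ L s) = some v ∧ hd v = some f) ∧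
    (s', p') ∈ delta pats ar L s f ∧ q = p ++ p'

/-- The work set `W(s,p)`: the positions of `t` below the position pointer that
still have to be inspected. -/
def Work (t : Tm F) (s : St F) (p : Pos) : Set Pos :=
  {x | ∃ q, x = p ++ q ∧ x ∈ Dom t ∧ ∃ r ∈ posMO s, below q r}

/-- The output function: match announcements whose obligation is completed by
observing `f` at the label position. -/
def outS (ar : F → ℕ) (L : St F → Pos) (s : St F) (f : F) : Set (Tm F × Pos) :=
  {ma | ({(Tm.app f (List.replicate (ar f) Tm.var), L s)}, ma) ∈ s}


/-! ### Auxiliary lemmas -/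

section Aux
variable {F : Type}

lemma below_iff_prefix {p q : Pos} : below p q ↔ q <+: p := by
  constructor
  · rintro ⟨r, rfl⟩; exact ⟨r, rfl⟩
  · rintro ⟨r, rfl⟩; exact ⟨r, rfl⟩

lemma below_refl (p : Pos) : below p p := ⟨[], by simp⟩

lemma below_nil (p : Pos) : below p [] := ⟨p, rfl⟩

lemma below_append {p q r : Pos} (h : below p q) : below (r ++ p) (r ++ q) := by
  obtain ⟨w, rfl⟩ := h; exact ⟨w, by simp⟩

lemma below_of_append {p q r : Pos} (h : below (r ++ p) (r ++ q)) : below p q := by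
  obtain ⟨w, hw⟩ := h
  exact ⟨w, by rwa [List.append_assoc, List.append_cancel_left_eq] at hw⟩

lemma subtermAt_append (t : Tm F) (p q : Pos) :
    subtermAt t (p ++ q) = (subtermAt t p).bind (fun u => subtermAt u q) := by
  induction p generalizing t with
  | nil => simp [subtermAt]
  | cons i p ih =>
      cases t with
      | var => simp [subtermAt]
      | app f ts =>
          simp only [List.cons_append, subtermAt]
          cases h : ts[(i : ℕ) - 1]? with
          | none => simp
          | some u => simp [ih u]

lemma isSome_of_append {t : Tm F} {p q : Pos}
    (h : (subtermAt t (p ++ q)).isSome) : (subtermAt t p).isSome := by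
  rw [subtermAt_append] at h
  cases hp : subtermAt t p with
  | none => rw [hp] at h; simp at h
  | some u => simp

lemma wf_subterm {ar : F → ℕ} {t u : Tm F} {p : Pos} (hw : WF ar t)
    (h : subtermAt t p = some u) : WF ar u := by
  induction p generalizing t with
  | nil => simp [subtermAt] at h; subst h; exact hw
  | cons i p ih =>
      cases t with
      | var => simp [subtermAt] at h
      | app f ts =>
          simp only [subtermAt] at h
          cases hg : ts[(i : ℕ) - 1]? with
          | none => rw [hg] at h; simp at h
          | some w =>
              rw [hg] at h; simp at h
              cases hw with
              | app f ts hlen hall =>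
                  exact ih (hall w (List.mem_of_getElem? hg)) h

lemma hd_eq_some {v : Tm F} {f : F} (h : hd v = some f) :
    ∃ ts, v = Tm.app f ts := by
  cases v with
  | var => simp [hd] at h
  | app g ts => simp [hd] at h; subst h; exact ⟨ts, rfl⟩

lemma matches_sub {u₀ u t : Tm F} {r s : Pos} (hm : Matches u₀ t r)
    (h : subtermAt u₀ s = some u) : Matches u t (r ++ s) := by
  intro p' w hw hwv
  have : subtermAt u₀ (s ++ p') = some w := by
    rw [subtermAt_append, h]; simpa using hw
  have := hm (s ++ p') w this hwv
  rwa [← List.append_assoc] at this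

end Aux


section Aux2
variable {F : Type}

lemma exists_gcp {P : Set Pos} (hP : P.Nonempty) : ∃ g, IsGcp P g := by
  classical
  obtain ⟨p₀, hp₀⟩ := hP
  -- common prefixes
  set C : Set Pos := {r | ∀ p ∈ P, below p r} with hC
  have hnil : ([] : Pos) ∈ C := fun p _ => below_nil p
  have hbound : ∀ r ∈ C, r.length ≤ p₀.length := by
    intro r hr
    obtain ⟨w, hw⟩ := hr p₀ hp₀
    subst hw; simp
  have hex : ∃ n, ∃ r ∈ C, r.length = n := ⟨0, [], hnil, rfl⟩
  set Q : ℕ → Prop := fun n => ∃ r ∈ C, r.length = n with hQ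
  have hQ0 : Q 0 := ⟨[], hnil, rfl⟩
  have hNG := Nat.findGreatest_spec (P := Q) (Nat.zero_le p₀.length) hQ0
  obtain ⟨g, hgC, hglen⟩ := hNG
  refine ⟨g, hgC, ?_⟩
  intro r hr
  have hrC : r ∈ C := hr
  -- r and g are both prefixes of p₀, and |r| ≤ |g| by maximality
  have hrlen : r.length ≤ Nat.findGreatest Q p₀.length :=
    Nat.le_findGreatest (hbound r hrC) ⟨r, hrC, rfl⟩
  rw [← hglen] at hrlen
  have hrp : r <+: p₀ := below_iff_prefix.mp (hrC p₀ hp₀)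
  have hgp : g <+: p₀ := below_iff_prefix.mp (hgC p₀ hp₀)
  exact below_iff_prefix.mpr (List.prefix_of_prefix_length_le hrp hgp hrlen)

lemma gcp_prefix {P : Set Pos} {g p : Pos} (h : IsGcp P g) (hp : p ∈ P) :
    ∃ p', p = g ++ p' := h.1 p hp

lemma dom_finite (t : Tm F) : (Dom t).Finite := by
  have : ∀ n (t : Tm F), sizeOf t ≤ n → (Dom t).Finite := by
    intro n
    induction n with
    | zero => intro t ht; cases t <;> simp at ht
    | succ n ih =>
        intro t ht
        cases t with
        | var =>
            have : Dom (F := F) Tm.var ⊆ {[]} := by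
              intro p hp
              cases p with
              | nil => rfl
              | cons i q => simp [Dom, subtermAt] at hp
            exact Set.Finite.subset (Set.finite_singleton _) this
        | app f ts =>
            have hsub : Dom (Tm.app f ts) ⊆
                insert [] (⋃ i : Fin ts.length,
                  (fun q => (⟨(i : ℕ) + 1, Nat.succ_pos _⟩ : ℕ+) :: q) '' Dom (ts.get i)) := by
              intro p hp
              cases p with
              | nil => exact Set.mem_insert _ _
              | cons j q =>
                  simp only [Dom, Set.mem_setOf_eq, subtermAt] at hp
                  cases hg : ts[(j : ℕ) - 1]? with
                  | none => rw [hg] at hp; simp at hp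
                  | some u =>
                      rw [hg] at hp; simp only [Option.bind_some] at hp
                      have hlt : (j : ℕ) - 1 < ts.length := (List.getElem?_eq_some_iff.mp hg).1
                      refine Set.mem_insert_iff.mpr (Or.inr ?_)
                      refine Set.mem_iUnion.mpr ⟨⟨(j : ℕ) - 1, hlt⟩, q, ?_, ?_⟩
                      · have : ts.get ⟨(j : ℕ) - 1, hlt⟩ = u := by
                          have := List.getElem?_eq_some_iff.mp hg
                          exact this.2
                        rw [Dom, Set.mem_setOf_eq, this]; exact hp
                      · have hj1 : (j : ℕ) - 1 + 1 = (j : ℕ) := Nat.succ_pred_eq_of_pos j.2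
                        show (⟨((j:ℕ)-1) + 1, Nat.succ_pos _⟩ : ℕ+) :: q = j :: q
                        congr 1
                        exact Subtype.ext hj1
            refine Set.Finite.subset (Set.Finite.insert _ (Set.finite_iUnion ?_)) hsub
            intro i
            refine Set.Finite.image _ (ih (ts.get i) ?_)
            have h1 : sizeOf (ts.get i) < sizeOf ts :=
              List.sizeOf_lt_of_mem (ts.get_mem i)
            have h2 : sizeOf ts < sizeOf (Tm.app f ts) := by
              rw [Tm.app.sizeOf_spec]; omega
            omega
  exact this (sizeOf t) t le_rfl
end Aux2


section Main
variable {F : Type}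

/-- Goal invariant relative to node position `p`: for a goal `(mo, (ℓ, q))`,
the pattern is in `pats`, each obligation `(u,r)` is a non-variable subpattern
of `ℓ` at `r - q` lying inside the domain of `t`, and `ℓ` head-matches `t`
at all non-variable positions not covered by remaining obligations. -/
def Good (pats : Set (Tm F)) (t : Tm F) (p : Pos) (g : Goal F) : Prop :=
  g.2.1 ∈ pats ∧
  (∀ u r, (u, r) ∈ g.1 → u ≠ Tm.var ∧ ∃ r'', r = g.2.2 ++ r'' ∧
      subtermAt g.2.1 r'' = some u ∧ (subtermAt t (p ++ r)).isSome) ∧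
  (∀ p' u', subtermAt g.2.1 p' = some u' → u' ≠ Tm.var →
      (∀ u r'', (u, g.2.2 ++ r'') ∈ g.1 → ¬ below p' r'') →
      ∃ v, subtermAt t ((p ++ g.2.2) ++ p') = some v ∧ hd v = hd u')

def GInv (pats : Set (Tm F)) (t : Tm F) (s : St F) (p : Pos) : Prop :=
  ∀ g ∈ s, Good pats t p g

/-- Obligation positions form an antichain. -/
def AC (s : St F) : Prop := ∀ r₁ ∈ posMO s, ∀ r₂ ∈ posMO s, r₁ <+: r₂ → r₁ = r₂

/-- Every obligation position carries all fresh goals. -/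
def Fr (pats : Set (Tm F)) (s : St F) : Prop :=
  ∀ ρ ∈ posMO s, ∀ ℓ₀ ∈ pats, (({(ℓ₀, ρ)} : Obl F), (ℓ₀, ρ)) ∈ s

/-- Truth of all obligations of a match obligation. -/
def TrueO (t : Tm F) (p : Pos) (mo : Obl F) : Prop :=
  ∀ u r, (u, r) ∈ mo → Matches u t (p ++ r)

lemma mem_posMO {s : St F} {g : Goal F} {u : Tm F} {r : Pos}
    (hg : g ∈ s) (hu : (u, r) ∈ g.1) : r ∈ posMO s := ⟨g, hg, u, hu⟩

lemma posOf_single {ℓ₀ : Tm F} {ρ r : Pos} :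
    r ∈ posOf ({(ℓ₀, ρ)} : Obl F) ↔ r = ρ := by
  constructor
  · rintro ⟨u, hu⟩; exact congrArg Prod.snd hu
  · rintro rfl; exact ⟨ℓ₀, rfl⟩

lemma class_subset {X K : St F} (h : IsClass X K) : K ⊆ X := by
  obtain ⟨g₀, hg₀, rfl⟩ := h; exact fun g hg => hg.1

lemma class_closed {X K : St F} (h : IsClass X K) :
    ∀ g ∈ K, ∀ h' ∈ X, dirDep g h' → h' ∈ K := by
  obtain ⟨g₀, hg₀, rfl⟩ := h
  rintro g ⟨hgX, hrt⟩ h' hh' hdep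
  exact ⟨hh', hrt.tail ⟨hgX, hh', hdep⟩⟩

/-- Membership characterisation for the derivative. -/
lemma mem_deriv {pats : Set (Tm F)} {ar : F → ℕ} {s : St F} {lab : Pos} {f : F}
    {g : Goal F} (hg : g ∈ derivS pats ar s lab f) :
    (g ∈ s ∧ lab ∉ posOf g.1) ∨
    (∃ mo ma, (mo, ma) ∈ s ∧ (∃ ℓ, (ℓ, lab) ∈ mo ∧ hd ℓ = some f) ∧
        reduce mo (ar f) lab ≠ ∅ ∧ g = (reduce mo (ar f) lab, ma)) ∨
    (∃ (ℓ : Tm F) (i : ℕ+), ℓ ∈ pats ∧ (i : ℕ) ≤ ar f ∧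
        g = ({(ℓ, lab ++ [i])}, (ℓ, lab ++ [i]))) := by
  rcases hg with (h | h) | h
  · exact Or.inl h
  · exact Or.inr (Or.inl h)
  · exact Or.inr (Or.inr h)

lemma posMO_deriv {pats : Set (Tm F)} {ar : F → ℕ} {s : St F} {lab : Pos} {f : F}
    {r : Pos} (hr : r ∈ posMO (derivS pats ar s lab f)) :
    (r ∈ posMO s ∧ r ≠ lab) ∨ ∃ i : ℕ+, (i : ℕ) ≤ ar f ∧ r = lab ++ [i] := by
  obtain ⟨g, hg, u, hu⟩ := hr
  rcases mem_deriv hg with ⟨hgs, hnot⟩ | ⟨mo, ma, hmo, _, _, rfl⟩ | ⟨ℓ, i, _, hi, rfl⟩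
  · exact Or.inl ⟨mem_posMO hgs hu, fun h => hnot (h ▸ ⟨u, hu⟩)⟩
  · rcases hu with ⟨hin, hne⟩ | ⟨ℓ', u', i, hℓ', hi, hsub, hnv, hx⟩
    · exact Or.inl ⟨mem_posMO hmo hin, hne⟩
    · exact Or.inr ⟨i, hi, congrArg Prod.snd hx⟩
  · simp only [Set.mem_singleton_iff] at hu
    exact Or.inr ⟨i, hi, congrArg Prod.snd hu⟩

lemma posMA_prefix {K : St F} {g₀ : Pos} (hgcp : IsGcp (posMA K) g₀)
    {g : Goal F} (hg : g ∈ K) : ∃ q', g.2.2 = g₀ ++ q' := by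
  have : g.2.2 ∈ posMA K := ⟨g.1, g.2.1, by rcases g with ⟨mo, ℓ, q⟩; exact hg⟩
  exact hgcp.1 _ this

lemma mem_liftSt {g₀ : Pos} {K : St F} {g : Goal F} :
    g ∈ liftSt g₀ K ↔ ∃ g' ∈ K, liftGoal g₀ g' = g := Set.mem_image _ _ _

lemma liftGoal_fresh (g₀ : Pos) (ℓ₀ : Tm F) (ρ' : Pos) :
    liftGoal g₀ (({(ℓ₀, g₀ ++ ρ')} : Obl F), (ℓ₀, g₀ ++ ρ')) =
      (({(ℓ₀, ρ')} : Obl F), (ℓ₀, ρ')) := by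
  unfold liftGoal
  simp [List.drop_left]

/-- Obligation positions of lifted classes come from positions of `K` with the
gcp as prefix (using the `Good` invariant to see that obligation positions
extend announcement positions). -/
lemma posMO_lift {pats : Set (Tm F)} {t : Tm F} {p : Pos} {K : St F} {g₀ : Pos}
    (hK : ∀ g ∈ K, Good pats t p g) (hgcp : IsGcp (posMA K) g₀) {r' : Pos}
    (hr : r' ∈ posMO (liftSt g₀ K)) : g₀ ++ r' ∈ posMO K := by
  obtain ⟨g, hg, u, hu⟩ := hr
  obtain ⟨g', hg', rfl⟩ := mem_liftSt.mp hg
  obtain ⟨y, hy, hyeq⟩ := hu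
  obtain ⟨q', hq'⟩ := posMA_prefix hgcp hg'
  obtain ⟨-, ⟨r'', hr'', -, -⟩⟩ := ((hK g' hg').2.1 y.1 y.2 hy)
  have hy2 : y.2 = g₀ ++ (q' ++ r'') := by rw [hr'', hq', List.append_assoc]
  have hdrop : y.2.drop g₀.length = q' ++ r'' := by rw [hy2, List.drop_left]
  have : r' = q' ++ r'' := by
    have := congrArg Prod.snd hyeq
    simp only at this
    rw [← this, hdrop]
  refine ⟨g', hg', y.1, ?_⟩
  have : y = (y.1, g₀ ++ r') := by
    rw [this, ← hy2]
  rw [← this]; exact hy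

end Main


section Pres
variable {F : Type}

lemma subtermAt_child (f : F) (ts : List (Tm F)) (i : ℕ+) :
    subtermAt (Tm.app f ts) [i] = ts[(i : ℕ) - 1]? := by
  show (ts[(i : ℕ) - 1]?).bind (fun u => subtermAt u []) = _
  cases h : ts[(i : ℕ) - 1]? <;> simp [subtermAt]

lemma mem_reduce {mo : Obl F} {n : ℕ} {lab : Pos} {x : Tm F × Pos} :
    x ∈ reduce mo n lab ↔
      (x ∈ mo ∧ x.2 ≠ lab) ∨
      (∃ (ℓ u : Tm F) (i : ℕ+), (ℓ, lab) ∈ mo ∧ (i : ℕ) ≤ n ∧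
        subtermAt ℓ [i] = some u ∧ u ≠ Tm.var ∧ x = (u, lab ++ [i])) := Iff.rfl

lemma child_dom {ar : F → ℕ} {t v : Tm F} {r : Pos} {f : F}
    (hw : WF ar t) (hv : subtermAt t r = some v) (hf : hd v = some f)
    {i : ℕ+} (hi : (i : ℕ) ≤ ar f) :
    ∃ u, subtermAt t (r ++ [i]) = some u := by
  obtain ⟨ts, rfl⟩ := hd_eq_some hf
  have hwfv := wf_subterm hw hv
  have hlen : ts.length = ar f := by cases hwfv; assumption
  rw [subtermAt_append, hv, Option.bind_some, subtermAt_child]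
  have hlt : (i : ℕ) - 1 < ts.length := by
    have h1 : (i : ℕ) ≤ ts.length := by rw [hlen]; exact hi
    have h2 : 0 < (i : ℕ) := i.2
    omega
  exact ⟨ts.get ⟨_, hlt⟩, List.getElem?_eq_getElem hlt⟩

lemma good_reduce {pats : Set (Tm F)} {ar : F → ℕ} {t : Tm F}
    (hw : WF ar t) (hWF : ∀ ℓ ∈ pats, WF ar ℓ)
    {p lab : Pos} {v : Tm F} {f : F}
    (hv : subtermAt t (p ++ lab) = some v) (hf : hd v = some f)
    {mo : Obl F} {ℓ : Tm F} {q : Pos} (hG : Good pats t p (mo, (ℓ, q)))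
    {u₀ : Tm F} (hu₀ : (u₀, lab) ∈ mo) (hhd : hd u₀ = some f) :
    Good pats t p (reduce mo (ar f) lab, (ℓ, q)) := by
  obtain ⟨hpat, hb, hcm⟩ := hG
  obtain ⟨hu₀nv, w, hlabw, hsubw, hdomlab⟩ := hb u₀ lab hu₀
  have hfun : ∀ ℓ', (ℓ', lab) ∈ mo → ℓ' = u₀ := by
    intro ℓ' h
    obtain ⟨-, w', hw', hsub', -⟩ := hb ℓ' lab h
    have hww : w' = w := List.append_cancel_left (hw' ▸ hlabw)
    rw [hww] at hsub'
    exact Option.some.inj (hsub'.symm.trans hsubw)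
  obtain ⟨args, hu₀eq⟩ := hd_eq_some hhd
  have hwfu₀ : WF ar u₀ := wf_subterm (hWF ℓ hpat) hsubw
  have hlen : args.length = ar f := by rw [hu₀eq] at hwfu₀; cases hwfu₀; assumption
  have hchild : ∀ i : ℕ+, (i : ℕ) ≤ ar f →
      ∃ u, subtermAt t (p ++ (lab ++ [i])) = some u := by
    intro i hi
    rw [← List.append_assoc]
    exact child_dom hw hv hf hi
  have hsubℓi : ∀ i : ℕ+, subtermAt ℓ (w ++ [i]) = subtermAt u₀ [i] := by
    intro i
    rw [subtermAt_append, hsubw, Option.bind_some]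
  refine ⟨hpat, ?_, ?_⟩
  · rintro u r hur
    rcases mem_reduce.mp hur with ⟨hmo, -⟩ | ⟨ℓ', u', i, hℓ'lab, hi, hsubi, hnv, hx⟩
    · exact hb u r hmo
    · obtain ⟨rfl, rfl⟩ : u = u' ∧ r = lab ++ [i] := by
        have h1 := congrArg Prod.fst hx
        have h2 := congrArg Prod.snd hx
        exact ⟨h1, h2⟩
      have hℓ'u₀ : ℓ' = u₀ := hfun ℓ' hℓ'lab
      subst hℓ'u₀
      refine ⟨hnv, w ++ [i], ?_, ?_, ?_⟩
      · rw [hlabw, List.append_assoc]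
      · rw [hsubℓi]; exact hsubi
      · obtain ⟨u', hu'⟩ := hchild i hi
        rw [hu']; rfl
  · intro p' u' hp' hnv H'
    by_cases hcase : ∀ u r'', (u, q ++ r'') ∈ mo → ¬ below p' r''
    · exact hcm p' u' hp' hnv hcase
    · push_neg at hcase
      obtain ⟨u₁, r₁, hmem, hbel⟩ := hcase
      by_cases hne : q ++ r₁ = lab
      · -- r₁ = w, u₁ = u₀
        have hr₁w : r₁ = w := List.append_cancel_left (hne.trans hlabw)
        subst hr₁w
        have hu₁u₀ : u₁ = u₀ := hfun u₁ (hne ▸ hmem)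
        clear hlabw
        obtain ⟨rest, hrest⟩ := hbel
        have hsubrest : subtermAt u₀ rest = some u' := by
          have := hp'
          rw [hrest, subtermAt_append, hsubw, Option.bind_some] at this
          exact this
        cases rest with
        | nil =>
            have hu'u₀ : u' = u₀ := by
              simp [subtermAt] at hsubrest; exact hsubrest.symm
            refine ⟨v, ?_, ?_⟩
            · show subtermAt t ((p ++ q) ++ p') = some v
              rw [hrest, List.append_nil, List.append_assoc, hne]
              exact hv
            · rw [hu'u₀, hhd, hf]
        | cons j rest' =>
            rw [hu₀eq] at hsubrest
            show ∃ v, subtermAt t ((p ++ q) ++ p') = some v ∧ hd v = hd u'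
            exfalso
            cases hg : args[(j : ℕ) - 1]? with
            | none =>
                rw [show subtermAt (Tm.app f args) (j :: rest') =
                  (args[(j:ℕ)-1]?).bind (fun u => subtermAt u rest') from rfl,
                  hg] at hsubrest
                simp at hsubrest
            | some u₂ =>
                have hsub2 : subtermAt u₂ rest' = some u' := by
                  rw [show subtermAt (Tm.app f args) (j :: rest') =
                    (args[(j:ℕ)-1]?).bind (fun u => subtermAt u rest') from rfl,
                    hg] at hsubrest
                  simpa using hsubrest
                have hj : (j : ℕ) ≤ ar f := by
                  have := (List.getElem?_eq_some_iff.mp hg).1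
                  omega
                by_cases hvar : u₂ = Tm.var
                · subst hvar
                  cases rest' with
                  | nil => simp [subtermAt] at hsub2; exact hnv hsub2.symm
                  | cons a b => simp [subtermAt] at hsub2
                · have hnew : (u₂, lab ++ [j]) ∈ reduce mo (ar f) lab := by
                    refine mem_reduce.mpr (Or.inr ⟨u₀, u₂, j, hu₀, hj, ?_, hvar, rfl⟩)
                    rw [hu₀eq, subtermAt_child]; exact hg
                  have hmem2 : (u₂, q ++ (r₁ ++ [j])) ∈ reduce mo (ar f) lab := by
                    rw [← List.append_assoc, hne]; exact hnew
                  refine H' u₂ (r₁ ++ [j]) hmem2 ⟨rest', ?_⟩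
                  rw [hrest]; simp
      · have hkept : (u₁, q ++ r₁) ∈ reduce mo (ar f) lab :=
          mem_reduce.mpr (Or.inl ⟨hmem, hne⟩)
        exact absurd hbel (H' u₁ r₁ hkept)

lemma good_fresh {pats : Set (Tm F)} {t : Tm F}
    (hpv : ∀ ℓ ∈ pats, ℓ ≠ Tm.var) {p : Pos} {ρ : Pos}
    {ℓ₀ : Tm F} (hℓ₀ : ℓ₀ ∈ pats)
    (hdom : (subtermAt t (p ++ ρ)).isSome) :
    Good pats t p (({(ℓ₀, ρ)} : Obl F), (ℓ₀, ρ)) := by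
  refine ⟨hℓ₀, ?_, ?_⟩
  · rintro u r hur
    obtain ⟨rfl, rfl⟩ : ℓ₀ = u ∧ ρ = r := by
      have := Set.mem_singleton_iff.mp hur
      exact ⟨(congrArg Prod.fst this).symm, (congrArg Prod.snd this).symm⟩
    exact ⟨hpv _ hℓ₀, [], by simp, by simp [subtermAt], hdom⟩
  · intro p' u' hp' hnv H'
    exfalso
    refine H' ℓ₀ [] ?_ (below_nil p')
    simp

lemma good_lift {pats : Set (Tm F)} {t : Tm F} {p : Pos} {K : St F} {g₀ : Pos}
    (hK : ∀ g ∈ K, Good pats t p g) (hgcp : IsGcp (posMA K) g₀) :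
    ∀ g' ∈ liftSt g₀ K, Good pats t (p ++ g₀) g' := by
  rintro g' hg'
  obtain ⟨g, hg, rfl⟩ := mem_liftSt.mp hg'
  obtain ⟨mo, ℓ, q⟩ := g
  obtain ⟨q', hq'⟩ := posMA_prefix hgcp hg
  simp only at hq'
  obtain ⟨hpat, hb, hcm⟩ := hK _ hg
  have hdropq : q.drop g₀.length = q' := by rw [hq', List.drop_left]
  have hmo' : ∀ u r', (u, r') ∈ (liftGoal g₀ (mo, (ℓ, q))).1 ↔
      ∃ r, (u, r) ∈ mo ∧ r' = r.drop g₀.length := by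
    intro u r'
    constructor
    · rintro ⟨y, hy, hyeq⟩
      refine ⟨y.2, ?_, ?_⟩
      · have h1 := congrArg Prod.fst hyeq
        simp only at h1
        have h3 : y = (u, y.2) := by rw [← h1]
        rw [← h3]; exact hy
      · have h2 := congrArg Prod.snd hyeq
        exact h2.symm
    · rintro ⟨r, hr, rfl⟩
      exact ⟨(u, r), hr, rfl⟩
  constructor
  · exact hpat
  constructor
  · rintro u r' hur'
    obtain ⟨r, hr, rfl⟩ := (hmo' u r').mp hur'
    obtain ⟨hnv, r'', hrq, hsub, hdom⟩ := hb u r hr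
    have hrg : r = g₀ ++ (q' ++ r'') := by rw [hrq, hq', List.append_assoc]
    refine ⟨hnv, r'', ?_, hsub, ?_⟩
    · show r.drop g₀.length = q.drop g₀.length ++ r''
      rw [hrg, List.drop_left, hdropq]
    · have : (p ++ g₀) ++ r.drop g₀.length = p ++ r := by
        rw [hrg, List.drop_left]; simp
      rwa [this]
  · intro p' u' hp' hnv H'
    have hH : ∀ u r'', (u, q ++ r'') ∈ mo → ¬ below p' r'' := by
      intro u r'' hmem
      refine H' u r'' ?_
      have : (u, (q ++ r'').drop g₀.length) ∈ (liftGoal g₀ (mo, (ℓ, q))).1 :=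
        (hmo' _ _).mpr ⟨q ++ r'', hmem, rfl⟩
      have heq : (q ++ r'').drop g₀.length = q.drop g₀.length ++ r'' := by
        rw [hq', List.append_assoc, List.drop_left, List.drop_left]
      rwa [heq] at this
    obtain ⟨v, hv, hh⟩ := hcm p' u' hp' hnv hH
    refine ⟨v, ?_, hh⟩
    have : ((p ++ g₀) ++ (liftGoal g₀ (mo, (ℓ, q))).2.2) ++ p' = (p ++ q) ++ p' := by
      show ((p ++ g₀) ++ q.drop g₀.length) ++ p' = _
      rw [hdropq, hq', ← List.append_assoc]
    rwa [this]

end Pres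


section Pres2
variable {F : Type}

lemma below_trans {a b c : Pos} (h1 : below a b) (h2 : below b c) : below a c := by
  obtain ⟨x, rfl⟩ := h1; obtain ⟨y, rfl⟩ := h2
  exact ⟨y ++ x, by rw [List.append_assoc]⟩

lemma unchanged_mem_deriv {pats : Set (Tm F)} {ar : F → ℕ} {s : St F} {lab : Pos}
    {f : F} {g : Goal F} (hg : g ∈ s) (hn : lab ∉ posOf g.1) :
    g ∈ derivS pats ar s lab f := Or.inl (Or.inl ⟨hg, hn⟩)

lemma fresh_mem_deriv {pats : Set (Tm F)} {ar : F → ℕ} {s : St F} {lab : Pos}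
    {f : F} {ℓ₀ : Tm F} (hℓ₀ : ℓ₀ ∈ pats) {i : ℕ+} (hi : (i : ℕ) ≤ ar f) :
    (({(ℓ₀, lab ++ [i])} : Obl F), (ℓ₀, lab ++ [i])) ∈ derivS pats ar s lab f :=
  Or.inr ⟨ℓ₀, i, hℓ₀, hi, rfl⟩

lemma reduced_mem_deriv {pats : Set (Tm F)} {ar : F → ℕ} {s : St F} {lab : Pos}
    {f : F} {mo : Obl F} {ma : Tm F × Pos} (hmo : (mo, ma) ∈ s)
    (hex : ∃ ℓ, (ℓ, lab) ∈ mo ∧ hd ℓ = some f) (hne : reduce mo (ar f) lab ≠ ∅) :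
    (reduce mo (ar f) lab, ma) ∈ derivS pats ar s lab f :=
  Or.inl (Or.inr ⟨mo, ma, hmo, hex, hne, rfl⟩)

lemma fr_deriv {pats : Set (Tm F)} {ar : F → ℕ} {s : St F} {lab : Pos} {f : F}
    (hFr : Fr pats s) : Fr pats (derivS pats ar s lab f) := by
  intro ρ hρ ℓ₀ hℓ₀
  rcases posMO_deriv hρ with ⟨hρs, hne⟩ | ⟨i, hi, rfl⟩
  · refine unchanged_mem_deriv (hFr ρ hρs ℓ₀ hℓ₀) ?_
    intro h
    exact hne (posOf_single.mp h).symm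
  · exact fresh_mem_deriv hℓ₀ hi

lemma posMO_mono {s s' : St F} (h : s ⊆ s') : posMO s ⊆ posMO s' := by
  rintro ρ ⟨g, hg, u, hu⟩; exact ⟨g, h hg, u, hu⟩

lemma ac_mono {s s' : St F} (h : s ⊆ s') (hAC : AC s') : AC s :=
  fun r₁ h₁ r₂ h₂ hpre => hAC r₁ (posMO_mono h h₁) r₂ (posMO_mono h h₂) hpre

lemma ac_deriv {pats : Set (Tm F)} {ar : F → ℕ} {s : St F} {lab : Pos} {f : F}
    (hAC : AC s) (hlab : lab ∈ posMO s) : AC (derivS pats ar s lab f) := by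
  intro r₁ h₁ r₂ h₂ hpre
  rcases posMO_deriv h₁ with ⟨hs₁, hne₁⟩ | ⟨i, hi, rfl⟩ <;>
    rcases posMO_deriv h₂ with ⟨hs₂, hne₂⟩ | ⟨j, hj, hr₂⟩
  · exact hAC _ hs₁ _ hs₂ hpre
  · exfalso
    subst hr₂
    by_cases hlen : r₁.length ≤ lab.length
    · have hpl : r₁ <+: lab :=
        List.prefix_of_prefix_length_le hpre (List.prefix_append _ _) hlen
      exact hne₁ (hAC _ hs₁ _ hlab hpl)
    · have hlen2 : r₁.length = lab.length + 1 := by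
        have := hpre.length_le
        simp at this
        omega
      have : r₁ = lab ++ [j] := List.IsPrefix.eq_of_length hpre (by simp [hlen2])
      subst this
      have hpl : lab <+: lab ++ [j] := List.prefix_append _ _
      have := hAC _ hlab _ hs₁ hpl
      simp at this
  · exfalso
    have hpl : lab <+: r₂ := (List.prefix_append lab [i]).trans hpre
    exact hne₂ (hAC _ hlab _ hs₂ hpl).symm
  · subst hr₂
    exact List.IsPrefix.eq_of_length hpre (by simp)

lemma fr_class {pats : Set (Tm F)} {X K : St F} (hFr : Fr pats X)
    (hK : IsClass X K) : Fr pats K := by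
  rintro ρ ⟨g, hgK, u, hu⟩ ℓ₀ hℓ₀
  have hX := hFr ρ ⟨g, class_subset hK hgK, u, hu⟩ ℓ₀ hℓ₀
  exact class_closed hK g hgK _ hX ⟨ρ, ⟨u, hu⟩, posOf_single.mpr rfl⟩

lemma fr_lift {pats : Set (Tm F)} {t : Tm F} {p : Pos} {K : St F} {g₀ : Pos}
    (hK : ∀ g ∈ K, Good pats t p g) (hgcp : IsGcp (posMA K) g₀)
    (hFrK : Fr pats K) : Fr pats (liftSt g₀ K) := by
  intro ρ' hρ' ℓ₀ hℓ₀
  have hmem : g₀ ++ ρ' ∈ posMO K := posMO_lift hK hgcp hρ'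
  have hfr := hFrK _ hmem ℓ₀ hℓ₀
  have himg : liftGoal g₀ (({(ℓ₀, g₀ ++ ρ')} : Obl F), (ℓ₀, g₀ ++ ρ')) ∈ liftSt g₀ K :=
    ⟨_, hfr, rfl⟩
  rwa [liftGoal_fresh] at himg

lemma ac_lift {pats : Set (Tm F)} {t : Tm F} {p : Pos} {K : St F} {g₀ : Pos}
    (hK : ∀ g ∈ K, Good pats t p g) (hgcp : IsGcp (posMA K) g₀)
    (hACK : AC K) : AC (liftSt g₀ K) := by
  intro r₁ h₁ r₂ h₂ hpre
  have m₁ := posMO_lift hK hgcp h₁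
  have m₂ := posMO_lift hK hgcp h₂
  have hpp : (g₀ ++ r₁) <+: (g₀ ++ r₂) := by
    obtain ⟨w, rfl⟩ := hpre
    exact ⟨w, by rw [List.append_assoc]⟩
  have := hACK _ m₁ _ m₂ hpp
  exact List.append_cancel_left this

lemma deriv_good {pats : Set (Tm F)} {ar : F → ℕ} {t : Tm F}
    (hw : WF ar t) (hWF : ∀ ℓ ∈ pats, WF ar ℓ) (hpv : ∀ ℓ ∈ pats, ℓ ≠ Tm.var)
    {s : St F} {p lab : Pos} {f : F} {v : Tm F}
    (hGInv : GInv pats t s p)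
    (hv : subtermAt t (p ++ lab) = some v) (hf : hd v = some f) :
    ∀ g ∈ derivS pats ar s lab f, Good pats t p g := by
  intro g hg
  rcases mem_deriv hg with ⟨hgs, -⟩ |
    ⟨mo, ma, hmo, ⟨ℓ', hℓ'lab, hhd'⟩, hne, rfl⟩ | ⟨ℓ, i, hℓ, hi, rfl⟩
  · exact hGInv g hgs
  · obtain ⟨ℓma, qma⟩ := ma
    exact good_reduce hw hWF hv hf (hGInv _ hmo) hℓ'lab hhd'
  · refine good_fresh hpv hℓ ?_
    obtain ⟨u, hu⟩ := child_dom hw hv hf hi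
    rw [← List.append_assoc, hu]
    rfl

lemma step_pres {pats : Set (Tm F)} {ar : F → ℕ} {L : St F → Pos} {t : Tm F}
    (hw : WF ar t) (hWF : ∀ ℓ ∈ pats, WF ar ℓ) (hpv : ∀ ℓ ∈ pats, ℓ ≠ Tm.var)
    {s : St F} {p : Pos} {f : F} {v : Tm F} {s' : St F} {g₀ : Pos}
    (hGInv : GInv pats t s p) (hAC : AC s) (hFr : Fr pats s)
    (hlab : L s ∈ posMO s)
    (hv : subtermAt t (p ++ L s) = some v) (hf : hd v = some f)
    (hδ : (s', g₀) ∈ delta pats ar L s f) :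
    GInv pats t s' (p ++ g₀) ∧ AC s' ∧ Fr pats s' := by
  obtain ⟨K, hKcl, hgcp, hx⟩ := hδ
  simp only at hgcp hx
  subst hx
  have hXgood := deriv_good hw hWF hpv hGInv hv hf (s := s) (lab := L s) (f := f)
  have hKgood : ∀ g ∈ K, Good pats t p g := fun g hg => hXgood g (class_subset hKcl hg)
  refine ⟨good_lift hKgood hgcp, ?_, ?_⟩
  · exact ac_lift hKgood hgcp (ac_mono (class_subset hKcl) (ac_deriv hAC hlab))
  · exact fr_lift hKgood hgcp (fr_class (fr_deriv hFr) hKcl)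

lemma node_reachable {pats : Set (Tm F)} {ar : F → ℕ} {L : St F → Pos} {t : Tm F}
    {s : St F} {p : Pos} (h : Node pats ar L t s p) : Reachable pats ar L s := by
  induction h with
  | root => exact .init
  | step s p f s' p' hn hv hδ ih => exact .step s f s' p' ih hδ

lemma mem_initSt {pats : Set (Tm F)} {g : Goal F} (hg : g ∈ initSt pats) :
    ∃ ℓ ∈ pats, g = (({(ℓ, ([] : Pos))} : Obl F), (ℓ, ([] : Pos))) := hg

lemma posMO_initSt {pats : Set (Tm F)} {ρ : Pos} (h : ρ ∈ posMO (initSt pats)) :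
    ρ = [] := by
  obtain ⟨g, hg, u, hu⟩ := h
  obtain ⟨ℓ, hℓ, rfl⟩ := mem_initSt hg
  exact (congrArg Prod.snd (Set.mem_singleton_iff.mp hu))

lemma lab_mem_posMO {pats : Set (Tm F)} {ar : F → ℕ} {L : St F → Pos}
    (hL : RootLabel pats ar L) {s : St F} (hr : Reachable pats ar L s) :
    L s ∈ posMO s := by
  obtain ⟨mo, ℓr, hroot, hlabpos⟩ := hL s hr
  exact ⟨(mo, (ℓr, [])), hroot, hlabpos⟩

lemma node_inv {pats : Set (Tm F)} {ar : F → ℕ} {L : St F → Pos} {t : Tm F}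
    (hw : WF ar t) (hWF : ∀ ℓ ∈ pats, WF ar ℓ) (hpv : ∀ ℓ ∈ pats, ℓ ≠ Tm.var)
    (hL : RootLabel pats ar L) {s : St F} {p : Pos}
    (h : Node pats ar L t s p) : GInv pats t s p ∧ AC s ∧ Fr pats s := by
  induction h with
  | root =>
      refine ⟨?_, ?_, ?_⟩
      · rintro g hg
        obtain ⟨ℓ, hℓ, rfl⟩ := mem_initSt hg
        exact good_fresh hpv hℓ (by simp [subtermAt])
      · intro r₁ h₁ r₂ h₂ hpre
        rw [posMO_initSt h₁, posMO_initSt h₂]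
      · intro ρ hρ ℓ₀ hℓ₀
        rw [posMO_initSt hρ]
        exact ⟨ℓ₀, hℓ₀, rfl⟩
  | step s p f s' p' hn hv hδ ih =>
      obtain ⟨hI, hA, hF⟩ := ih
      obtain ⟨v, hv', hf⟩ := hv
      exact step_pres hw hWF hpv hI hA hF
        (lab_mem_posMO hL (node_reachable hn)) hv' hf hδ

lemma work_subset_dom {t : Tm F} {s : St F} {p : Pos} : Work t s p ⊆ Dom t := by
  rintro x ⟨q, rfl, hdom, -⟩; exact hdom

lemma lab_mem_work {t : Tm F} {s : St F} {p lab : Pos} (hlab : lab ∈ posMO s)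
    (hdom : p ++ lab ∈ Dom t) : p ++ lab ∈ Work t s p :=
  ⟨lab, rfl, hdom, lab, hlab, below_refl _⟩

lemma work_step {pats : Set (Tm F)} {ar : F → ℕ} {L : St F → Pos} {t : Tm F}
    {s : St F} {p : Pos} {f : F} {K : St F} {g₀ : Pos}
    (hKcl : IsClass (derivS pats ar s (L s) f) K)
    (hKgood : ∀ g ∈ K, Good pats t p g) (hgcp : IsGcp (posMA K) g₀)
    (hAC : AC s) (hlab : L s ∈ posMO s) :
    Work t (liftSt g₀ K) (p ++ g₀) ⊆ Work t s p \ {p ++ L s} := by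
  rintro x ⟨q', rfl, hdom, r', hr', hbel⟩
  have hmemK : g₀ ++ r' ∈ posMO K := posMO_lift hKgood hgcp hr'
  have hmemX : g₀ ++ r' ∈ posMO (derivS pats ar s (L s) f) :=
    posMO_mono (class_subset hKcl) hmemK
  have hassoc : (p ++ g₀) ++ q' = p ++ (g₀ ++ q') := by rw [List.append_assoc]
  rcases posMO_deriv hmemX with ⟨hs, hne⟩ | ⟨i, hi, heq⟩
  · constructor
    · exact ⟨g₀ ++ q', hassoc, hdom, g₀ ++ r', hs, below_append hbel⟩
    · intro hx
      have hx' : (p ++ g₀) ++ q' = p ++ L s := hx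
      rw [hassoc] at hx'
      have hql : g₀ ++ q' = L s := List.append_cancel_left hx'
      have hpre : (g₀ ++ r') <+: L s := by
        rw [← hql]
        exact below_iff_prefix.mp (below_append hbel)
      exact hne (hAC _ hs _ hlab hpre)
  · constructor
    · refine ⟨g₀ ++ q', hassoc, hdom, L s, hlab, ?_⟩
      have h1 : below (g₀ ++ q') (g₀ ++ r') := below_append hbel
      have h2 : below (g₀ ++ r') (L s) := heq ▸ ⟨[i], rfl⟩
      exact below_trans h1 h2
    · intro hx
      have hx' : (p ++ g₀) ++ q' = p ++ L s := hx
      rw [hassoc] at hx'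
      have hql : g₀ ++ q' = L s := List.append_cancel_left hx'
      obtain ⟨w, hw⟩ := hbel
      have heq2 : L s = (L s ++ [i]) ++ w := by
        calc L s = g₀ ++ q' := hql.symm
          _ = g₀ ++ (r' ++ w) := by rw [hw]
          _ = (g₀ ++ r') ++ w := by rw [List.append_assoc]
          _ = (L s ++ [i]) ++ w := by rw [heq]
      have hlen := congrArg List.length heq2
      simp at hlen

lemma work_card_lt {t : Tm F} {s : St F} {p lab : Pos} {W' : Set Pos}
    (hsub : W' ⊆ Work t s p \ {p ++ lab})
    (hmem : p ++ lab ∈ Work t s p) : W'.ncard < (Work t s p).ncard := by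
  have hfin : (Work t s p).Finite := (dom_finite t).subset work_subset_dom
  have hss : W' ⊂ Work t s p := by
    refine ⟨hsub.trans Set.diff_subset, fun hsup => ?_⟩
    exact (hsub (hsup hmem)).2 rfl
  exact Set.ncard_lt_ncard hss hfin

end Pres2


section Track
variable {F : Type}

/-- Given a goal in the derivative, build a successor node containing it. -/
lemma descend {pats : Set (Tm F)} {ar : F → ℕ} {L : St F → Pos} {t : Tm F}
    {s : St F} {p : Pos} {f : F} {v : Tm F}
    (hn : Node pats ar L t s p)
    (hv : subtermAt t (p ++ L s) = some v) (hf : hd v = some f)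
    {g₁ : Goal F} (hg₁ : g₁ ∈ derivS pats ar s (L s) f) :
    ∃ K g₀, IsClass (derivS pats ar s (L s) f) K ∧ g₁ ∈ K ∧
      IsGcp (posMA K) g₀ ∧ (liftSt g₀ K, g₀) ∈ delta pats ar L s f ∧
      Node pats ar L t (liftSt g₀ K) (p ++ g₀) := by
  set X := derivS pats ar s (L s) f with hX
  set K : St F := {g' | g' ∈ X ∧
    Relation.ReflTransGen (fun a b => a ∈ X ∧ b ∈ X ∧ dirDep a b) g₁ g'} with hK
  have hKcl : IsClass X K := ⟨g₁, hg₁, rfl⟩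
  have hg₁K : g₁ ∈ K := ⟨hg₁, Relation.ReflTransGen.refl⟩
  have hma : g₁.2.2 ∈ posMA K := by
    refine ⟨g₁.1, g₁.2.1, ?_⟩
    exact hg₁K
  obtain ⟨g₀, hgcp⟩ := exists_gcp ⟨g₁.2.2, hma⟩
  have hδ : (liftSt g₀ K, g₀) ∈ delta pats ar L s f := ⟨K, hKcl, hgcp, rfl⟩
  exact ⟨K, g₀, hKcl, hg₁K, hgcp, hδ, Node.step s p f _ g₀ hn ⟨v, hv, hf⟩ hδ⟩

/-- Lifting preserves tracked (true) goals. -/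
lemma lift_track {pats : Set (Tm F)} {t : Tm F} {p : Pos} {K : St F} {g₀ : Pos}
    (hKgood : ∀ g ∈ K, Good pats t p g) (hgcp : IsGcp (posMA K) g₀)
    {mo : Obl F} {ℓ : Tm F} {q : Pos} (hg : (mo, (ℓ, q)) ∈ K)
    (htrue : TrueO t p mo) :
    ∃ mo' q', (mo', (ℓ, q')) ∈ liftSt g₀ K ∧ TrueO t (p ++ g₀) mo' ∧
      g₀ ++ q' = q := by
  obtain ⟨q', hq'⟩ := posMA_prefix hgcp hg
  simp only at hq'
  refine ⟨(fun y : Tm F × Pos => (y.1, y.2.drop g₀.length)) '' mo, q.drop g₀.length,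
    ⟨(mo, (ℓ, q)), hg, rfl⟩, ?_, by rw [hq', List.drop_left]⟩
  rintro u r' ⟨y, hy, hyeq⟩
  have hu : y.1 = u := congrArg Prod.fst hyeq
  have hr : y.2.drop g₀.length = r' := congrArg Prod.snd hyeq
  obtain ⟨-, r'', hrq, -, -⟩ := (hKgood _ hg).2.1 y.1 y.2 hy
  simp only at hrq
  have hy2 : y.2 = g₀ ++ (q' ++ r'') := by rw [hrq, hq', List.append_assoc]
  have hdrop : y.2.drop g₀.length = q' ++ r'' := by rw [hy2, List.drop_left]
  have hmt : Matches y.1 t (p ++ y.2) := htrue y.1 y.2 hy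
  rw [hu] at hmt
  have hpos : (p ++ g₀) ++ r' = p ++ y.2 := by
    rw [← hr, hdrop, hy2]; simp
  rwa [← hpos] at hmt

lemma node_dom_lab {t v : Tm F} {x : Pos}
    (hv : subtermAt t x = some v) : x ∈ Dom t := by
  show (subtermAt t x).isSome
  rw [hv]; rfl

/-- Goal tracking: a true goal is eventually output. -/
lemma track_output {pats : Set (Tm F)} {ar : F → ℕ} {L : St F → Pos} {t : Tm F}
    (hc : Closed t) (hw : WF ar t)
    (hWF : ∀ ℓ ∈ pats, WF ar ℓ) (hpv : ∀ ℓ ∈ pats, ℓ ≠ Tm.var)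
    (hL : RootLabel pats ar L) :
    ∀ n : ℕ, ∀ (s : St F) (p : Pos), Node pats ar L t s p →
      (Work t s p).ncard ≤ n →
      ∀ (mo : Obl F) (ℓ : Tm F) (q : Pos), (mo, (ℓ, q)) ∈ s → TrueO t p mo →
      ∃ s₁ p₁ f₁ v₁ q₁, Node pats ar L t s₁ p₁ ∧
        subtermAt t (p₁ ++ L s₁) = some v₁ ∧ hd v₁ = some f₁ ∧
        (ℓ, q₁) ∈ outS ar L s₁ f₁ ∧ p₁ ++ q₁ = p ++ q := by
  intro n
  induction n using Nat.strong_induction_on with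
  | _ n ih =>
  intro s p hn hcard mo ℓ q hgoal htrue
  obtain ⟨hI, hA, hF⟩ := node_inv hw hWF hpv hL hn
  have hlab : L s ∈ posMO s := lab_mem_posMO hL (node_reachable hn)
  obtain ⟨gl, hgl, ul, hul⟩ := id hlab
  obtain ⟨-, rl'', -, -, hdoml⟩ := (hI gl hgl).2.1 ul (L s) hul
  obtain ⟨v, hv⟩ := Option.isSome_iff_exists.mp hdoml
  obtain ⟨f, hf⟩ : ∃ f, hd v = some f := by
    cases v with
    | var => exact absurd rfl (hc _ _ hv)
    | app f ts => exact ⟨f, rfl⟩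
  obtain ⟨hpat, hb, hcm⟩ := hI _ hgoal
  by_cases hcase : ∃ u₀, (u₀, L s) ∈ mo
  · obtain ⟨u₀, hu₀⟩ := hcase
    obtain ⟨hu₀nv, w, hlabw, hsubw, -⟩ := hb u₀ (L s) hu₀
    have hmu₀ : Matches u₀ t (p ++ L s) := htrue u₀ (L s) hu₀
    have hhd : hd u₀ = some f := by
      obtain ⟨v', hv', hh⟩ := hmu₀ [] u₀ (by simp [subtermAt]) hu₀nv
      rw [List.append_nil] at hv'
      have hveq : v' = v := Option.some.inj (hv'.symm.trans hv)
      rw [hveq] at hh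
      rw [← hh]
      exact hf
    by_cases hred : reduce mo (ar f) (L s) = ∅
    · -- the obligation is completed here: output
      have hfun : ∀ u r, (u, r) ∈ mo → u = u₀ ∧ r = L s := by
        intro u r hur
        have hrl : r = L s := by
          by_contra hner
          have hmem : (u, r) ∈ reduce mo (ar f) (L s) :=
            mem_reduce.mpr (Or.inl ⟨hur, hner⟩)
          rw [hred] at hmem
          exact hmem
        subst hrl
        obtain ⟨-, w', hw', hsub', -⟩ := hb u (L s) hur
        have hww : w' = w := List.append_cancel_left (hw' ▸ hlabw)
        rw [hww] at hsub'
        exact ⟨Option.some.inj (hsub'.symm.trans hsubw), rfl⟩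
      obtain ⟨args, hu₀eq⟩ := hd_eq_some hhd
      have hwfu₀ : WF ar u₀ := wf_subterm (hWF ℓ hpat) hsubw
      have hlen : args.length = ar f := by
        rw [hu₀eq] at hwfu₀; cases hwfu₀; assumption
      have hargsvar : ∀ b ∈ args, b = Tm.var := by
        intro b hbmem
        by_contra hbv
        obtain ⟨k, hk⟩ := List.mem_iff_getElem?.mp hbmem
        have hk1 : k < args.length := (List.getElem?_eq_some_iff.mp hk).1
        obtain ⟨i₀, hi₀⟩ : ∃ i₀ : ℕ+, (i₀ : ℕ) = k + 1 := ⟨⟨k + 1, Nat.succ_pos k⟩, rfl⟩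
        have hile : (i₀ : ℕ) ≤ ar f := by rw [hi₀]; omega
        have hmem : (b, L s ++ [i₀]) ∈ reduce mo (ar f) (L s) := by
          refine mem_reduce.mpr (Or.inr ⟨u₀, b, i₀, hu₀, hile, ?_, hbv, rfl⟩)
          rw [hu₀eq, subtermAt_child, hi₀]
          show args[k + 1 - 1]? = some b
          simpa using hk
        rw [hred] at hmem
        exact hmem
      have hrepl : args = List.replicate (ar f) Tm.var :=
        List.eq_replicate_iff.mpr ⟨hlen, hargsvar⟩
      have hmoeq : mo = {(Tm.app f (List.replicate (ar f) Tm.var), L s)} := by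
        ext x
        constructor
        · intro hx
          obtain ⟨hx1, hx2⟩ := hfun x.1 x.2 hx
          have hxx : x = (u₀, L s) := Prod.ext hx1 hx2
          rw [hxx, hu₀eq, hrepl]
          rfl
        · intro hx
          rw [Set.mem_singleton_iff] at hx
          rw [hx, ← hrepl, ← hu₀eq]
          exact hu₀
      refine ⟨s, p, f, v, q, hn, hv, hf, ?_, rfl⟩
      show ({(Tm.app f (List.replicate (ar f) Tm.var), L s)}, (ℓ, q)) ∈ s
      rw [← hmoeq]
      exact hgoal
    · -- descend with the reduced goal
      have hg₁X := reduced_mem_deriv (pats := pats) hgoal ⟨u₀, hu₀, hhd⟩ hred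
      have htrue₁ : TrueO t p (reduce mo (ar f) (L s)) := by
        rintro u r hur
        rcases mem_reduce.mp hur with ⟨hmo, -⟩ |
          ⟨ℓ', u', i, hℓ'lab, hi, hsubi, hnv', hxeq⟩
        · exact htrue u r hmo
        · obtain ⟨rfl, rfl⟩ : u = u' ∧ r = L s ++ [i] :=
            ⟨congrArg Prod.fst hxeq, congrArg Prod.snd hxeq⟩
          have hℓ'u₀ : ℓ' = u₀ := by
            obtain ⟨-, w', hw', hsub', -⟩ := hb ℓ' (L s) hℓ'lab
            have hww : w' = w := List.append_cancel_left (hw' ▸ hlabw)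
            rw [hww] at hsub'
            exact Option.some.inj (hsub'.symm.trans hsubw)
          subst hℓ'u₀
          have hms := matches_sub hmu₀ hsubi
          rwa [List.append_assoc] at hms
      obtain ⟨K, g₀, hKcl, hg₁K, hgcp, hδ, hn'⟩ := descend hn hv hf hg₁X
      have hKgood : ∀ g ∈ K, Good pats t p g := fun g hg =>
        deriv_good hw hWF hpv hI hv hf g (class_subset hKcl hg)
      obtain ⟨mo', q', hmem', htrue', hq⟩ := lift_track hKgood hgcp hg₁K htrue₁
      have hlt := work_card_lt (work_step hKcl hKgood hgcp hA hlab)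
        (lab_mem_work hlab (node_dom_lab hv))
      obtain ⟨s₁, p₁, f₁, v₁, q₁, h1, h2, h3, h4, h5⟩ :=
        ih _ (lt_of_lt_of_le hlt hcard) _ _ hn' le_rfl mo' ℓ q' hmem' htrue'
      refine ⟨s₁, p₁, f₁, v₁, q₁, h1, h2, h3, h4, ?_⟩
      rw [h5, List.append_assoc, hq]
  · push_neg at hcase
    have hnot : L s ∉ posOf mo := fun h => hcase h.choose h.choose_spec
    have hg₁X : (mo, (ℓ, q)) ∈ derivS pats ar s (L s) f :=
      unchanged_mem_deriv hgoal hnot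
    obtain ⟨K, g₀, hKcl, hg₁K, hgcp, hδ, hn'⟩ := descend hn hv hf hg₁X
    have hKgood : ∀ g ∈ K, Good pats t p g := fun g hg =>
      deriv_good hw hWF hpv hI hv hf g (class_subset hKcl hg)
    obtain ⟨mo', q', hmem', htrue', hq⟩ := lift_track hKgood hgcp hg₁K htrue
    have hlt := work_card_lt (work_step hKcl hKgood hgcp hA hlab)
      (lab_mem_work hlab (node_dom_lab hv))
    obtain ⟨s₁, p₁, f₁, v₁, q₁, h1, h2, h3, h4, h5⟩ :=
      ih _ (lt_of_lt_of_le hlt hcard) _ _ hn' le_rfl mo' ℓ q' hmem' htrue'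
    refine ⟨s₁, p₁, f₁, v₁, q₁, h1, h2, h3, h4, ?_⟩
    rw [h5, List.append_assoc, hq]

end Track


section Track2
variable {F : Type}

/-- Position tracking: any obligation position is eventually inspected. -/
lemma track_inspect {pats : Set (Tm F)} {ar : F → ℕ} {L : St F → Pos} {t : Tm F}
    (hc : Closed t) (hw : WF ar t)
    (hWF : ∀ ℓ ∈ pats, WF ar ℓ) (hpv : ∀ ℓ ∈ pats, ℓ ≠ Tm.var)
    (hL : RootLabel pats ar L) (hpats : pats.Nonempty) :
    ∀ n : ℕ, ∀ (s : St F) (p : Pos), Node pats ar L t s p →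
      (Work t s p).ncard ≤ n → ∀ ρ ∈ posMO s,
      ∃ s₁ p₁, Node pats ar L t s₁ p₁ ∧ p₁ ++ L s₁ = p ++ ρ := by
  intro n
  induction n using Nat.strong_induction_on with
  | _ n ih =>
  intro s p hn hcard ρ hρ
  obtain ⟨hI, hA, hF⟩ := node_inv hw hWF hpv hL hn
  have hlab : L s ∈ posMO s := lab_mem_posMO hL (node_reachable hn)
  obtain ⟨gl, hgl, ul, hul⟩ := id hlab
  obtain ⟨-, rl'', -, -, hdoml⟩ := (hI gl hgl).2.1 ul (L s) hul
  obtain ⟨v, hv⟩ := Option.isSome_iff_exists.mp hdoml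
  obtain ⟨f, hf⟩ : ∃ f, hd v = some f := by
    cases v with
    | var => exact absurd rfl (hc _ _ hv)
    | app f ts => exact ⟨f, rfl⟩
  by_cases hρlab : ρ = L s
  · exact ⟨s, p, hn, by rw [hρlab]⟩
  · obtain ⟨ℓ₀, hℓ₀⟩ := hpats
    have hfr : (({(ℓ₀, ρ)} : Obl F), (ℓ₀, ρ)) ∈ s := hF ρ hρ ℓ₀ hℓ₀
    have hnot : L s ∉ posOf (({(ℓ₀, ρ)} : Obl F)) := by
      intro h
      exact hρlab (posOf_single.mp h).symm
    have hg₁X : (({(ℓ₀, ρ)} : Obl F), (ℓ₀, ρ)) ∈ derivS pats ar s (L s) f :=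
      unchanged_mem_deriv hfr hnot
    obtain ⟨K, g₀, hKcl, hg₁K, hgcp, hδ, hn'⟩ := descend hn hv hf hg₁X
    have hKgood : ∀ g ∈ K, Good pats t p g := fun g hg =>
      deriv_good hw hWF hpv hI hv hf g (class_subset hKcl hg)
    obtain ⟨ρ', hρ'⟩ := posMA_prefix hgcp hg₁K
    simp only at hρ'
    have hmem' : (({(ℓ₀, ρ')} : Obl F), (ℓ₀, ρ')) ∈ liftSt g₀ K := by
      have hh : liftGoal g₀ (({(ℓ₀, ρ)} : Obl F), (ℓ₀, ρ)) ∈ liftSt g₀ K :=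
        ⟨_, hg₁K, rfl⟩
      rwa [hρ', liftGoal_fresh] at hh
    have hρ'mem : ρ' ∈ posMO (liftSt g₀ K) := ⟨_, hmem', ℓ₀, rfl⟩
    have hlt := work_card_lt (work_step hKcl hKgood hgcp hA hlab)
      (lab_mem_work hlab (node_dom_lab hv))
    obtain ⟨s₁, p₁, h1, h2⟩ :=
      ih _ (lt_of_lt_of_le hlt hcard) _ _ hn' le_rfl ρ' hρ'mem
    refine ⟨s₁, p₁, h1, ?_⟩
    rw [h2, List.append_assoc, ← hρ']

/-- Every position of the term is inspected by some node. -/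
lemma inspect_all {pats : Set (Tm F)} {ar : F → ℕ} {L : St F → Pos} {t : Tm F}
    (hc : Closed t) (hw : WF ar t)
    (hWF : ∀ ℓ ∈ pats, WF ar ℓ) (hpv : ∀ ℓ ∈ pats, ℓ ≠ Tm.var)
    (hL : RootLabel pats ar L) (hpats : pats.Nonempty) :
    ∀ r : Pos, r ∈ Dom t →
      ∃ s₁ p₁, Node pats ar L t s₁ p₁ ∧ p₁ ++ L s₁ = r := by
  intro r
  induction r using List.reverseRecOn with
  | nil =>
      intro _
      refine ⟨initSt pats, [], Node.root, ?_⟩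
      obtain ⟨mo, ℓr, hroot, hlabpos⟩ := hL _ Reachable.init
      obtain ⟨ℓ, hℓ, heq⟩ := mem_initSt hroot
      have hmo : mo = {(ℓ, ([] : Pos))} := congrArg Prod.fst heq
      rw [hmo] at hlabpos
      have hnil : L (initSt pats) = [] := posOf_single.mp hlabpos
      rw [hnil]; rfl
  | append_singleton r₀ i ihr =>
      intro hdom
      have hdom₀ : r₀ ∈ Dom t := isSome_of_append hdom
      obtain ⟨s₁, p₁, hn₁, heq₁⟩ := ihr hdom₀
      obtain ⟨v, hv⟩ := Option.isSome_iff_exists.mp hdom₀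
      obtain ⟨f, ts, hveq⟩ : ∃ f ts, v = Tm.app f ts := by
        cases v with
        | var => exact absurd rfl (hc _ _ hv)
        | app f ts => exact ⟨f, ts, rfl⟩
      have hf : hd v = some f := by rw [hveq]; rfl
      have hlen : ts.length = ar f := by
        have hwv := wf_subterm hw hv
        rw [hveq] at hwv; cases hwv; assumption
      have hi : (i : ℕ) ≤ ar f := by
        have h1 : (subtermAt t (r₀ ++ [i])).isSome := hdom
        rw [subtermAt_append, hv, Option.bind_some, hveq, subtermAt_child] at h1
        cases hg : ts[(i : ℕ) - 1]? with
        | none => rw [hg] at h1; simp at h1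
        | some u =>
            have h3 : (i : ℕ) - 1 < ar f := by
              rw [← hlen]; exact (List.getElem?_eq_some_iff.mp hg).1
            have h2 : 0 < (i : ℕ) := i.2
            omega
      have hv₁ : subtermAt t (p₁ ++ L s₁) = some v := by rw [heq₁]; exact hv
      obtain ⟨ℓ₀, hℓ₀⟩ := hpats
      have hg₁X := fresh_mem_deriv (s := s₁) (lab := L s₁) hℓ₀ hi
      obtain ⟨K, g₀, hKcl, hg₁K, hgcp, hδ, hn'⟩ := descend hn₁ hv₁ hf hg₁X
      obtain ⟨hI, -, -⟩ := node_inv hw hWF hpv hL hn₁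
      have hKgood : ∀ g ∈ K, Good pats t p₁ g := fun g hg =>
        deriv_good hw hWF hpv hI hv₁ hf g (class_subset hKcl hg)
      obtain ⟨ρ', hρ'⟩ := posMA_prefix hgcp hg₁K
      simp only at hρ'
      have hmem' : (({(ℓ₀, ρ')} : Obl F), (ℓ₀, ρ')) ∈ liftSt g₀ K := by
        have hh : liftGoal g₀ (({(ℓ₀, L s₁ ++ [i])} : Obl F), (ℓ₀, L s₁ ++ [i])) ∈
            liftSt g₀ K := ⟨_, hg₁K, rfl⟩
        rwa [hρ', liftGoal_fresh] at hh
      have hρ'mem : ρ' ∈ posMO (liftSt g₀ K) := ⟨_, hmem', ℓ₀, rfl⟩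
      obtain ⟨s₂, p₂, h1, h2⟩ :=
        track_inspect hc hw hWF hpv hL ⟨ℓ₀, hℓ₀⟩ _ _ _ hn' le_rfl ρ' hρ'mem
      refine ⟨s₂, p₂, h1, ?_⟩
      rw [h2, List.append_assoc, ← hρ', ← List.append_assoc, heq₁]

end Track2

/-- Correctness of set-automaton evaluation: the outputs collected over all
nodes of the evaluation tree of a closed term `t` are exactly the pairs
`ℓ@p` such that the pattern `ℓ ∈ L` matches `t` at position `p ∈ D(t)`. -/
theorem evaluation_correct {F : Type} (pats : Set (Tm F))
    (ar : F → ℕ) (L : St F → Pos) (t : Tm F) (hc : Closed t) (hw : WF ar t)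
    (hpats : pats.Nonempty) (hWF : ∀ ℓ ∈ pats, WF ar ℓ)
    (hpv : ∀ ℓ ∈ pats, ℓ ≠ Tm.var) (hL : RootLabel pats ar L) :
    {x : Tm F × Pos | ∃ (s : St F) (p : Pos) (f : F) (v : Tm F) (q : Pos),
        Node pats ar L t s p ∧ subtermAt t (p ++ L s) = some v ∧
        hd v = some f ∧ (x.1, q) ∈ outS ar L s f ∧ x.2 = p ++ q} =
    {x : Tm F × Pos | x.1 ∈ pats ∧ x.2 ∈ Dom t ∧ Matches x.1 t x.2} := by
  ext x
  obtain ⟨ℓx, px⟩ := x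
  simp only [Set.mem_setOf_eq]
  constructor
  · rintro ⟨s, p, f, v, q, hn, hv, hf, hout, hx2⟩
    obtain ⟨hI, -, -⟩ := node_inv hw hWF hpv hL hn
    obtain ⟨hpat, hb, hcm⟩ := hI _ hout
    obtain ⟨hnv0, r'', hr'', hsub'', hdom''⟩ :=
      hb (Tm.app f (List.replicate (ar f) Tm.var)) (L s) rfl
    simp only at hr'' hsub'' hx2 hpat ⊢
    subst hx2
    have hlabeq : (p ++ q) ++ r'' = p ++ L s := by
      rw [List.append_assoc, ← hr'']
    refine ⟨hpat, ?_, ?_⟩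
    · have hiso : (subtermAt t ((p ++ q) ++ r'')).isSome := by
        rw [hlabeq, hv]; rfl
      exact isSome_of_append hiso
    · intro p'' u'' hsubp hnv
      by_cases hcov : below p'' r''
      · obtain ⟨rest, hrest⟩ := hcov
        have hsu : subtermAt (Tm.app f (List.replicate (ar f) Tm.var)) rest
            = some u'' := by
          have hx := hsubp
          rw [hrest, subtermAt_append, hsub'', Option.bind_some] at hx
          exact hx
        cases rest with
        | nil =>
            have hu'' : u'' = Tm.app f (List.replicate (ar f) Tm.var) := by
              simp [subtermAt] at hsu; exact hsu.symm
            refine ⟨v, ?_, ?_⟩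
            · rw [hrest, List.append_nil, hlabeq]
              exact hv
            · rw [hu'', hf]; rfl
        | cons j rest' =>
            exfalso
            rw [show subtermAt (Tm.app f (List.replicate (ar f) Tm.var)) (j :: rest') =
              ((List.replicate (ar f) Tm.var)[(j : ℕ) - 1]?).bind
                (fun u => subtermAt u rest') from rfl] at hsu
            cases hg : (List.replicate (ar f) Tm.var)[(j : ℕ) - 1]? with
            | none => rw [hg] at hsu; simp at hsu
            | some u1 =>
                have hu1 : u1 = Tm.var :=
                  List.eq_of_mem_replicate (List.mem_of_getElem? hg)
                rw [hg, hu1] at hsu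
                cases rest' with
                | nil => simp [subtermAt] at hsu; exact hnv hsu.symm
                | cons a b => simp [subtermAt] at hsu
      · have hH : ∀ u r₂,
            (u, q ++ r₂) ∈ ({(Tm.app f (List.replicate (ar f) Tm.var), L s)} : Obl F) →
            ¬ below p'' r₂ := by
          intro u r₂ hmem
          have h2 := congrArg Prod.snd (Set.mem_singleton_iff.mp hmem)
          simp only at h2
          have hr2 : r₂ = r'' := List.append_cancel_left (h2.trans hr'')
          rw [hr2]; exact hcov
        exact hcm p'' u'' hsubp hnv hH
  · rintro ⟨hpat, hdom, hmat⟩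
    rcases List.eq_nil_or_concat px with rfl | ⟨r₀, i, hpx⟩
    swap
    rw [List.concat_eq_append] at hpx
    subst hpx
    swap
    · have hgoal : (({(ℓx, ([] : Pos))} : Obl F), (ℓx, ([] : Pos))) ∈ initSt pats :=
        ⟨ℓx, hpat, rfl⟩
      have htrue : TrueO t [] {(ℓx, ([] : Pos))} := by
        rintro u r hur
        have h1 := congrArg Prod.fst (Set.mem_singleton_iff.mp hur)
        have h2 := congrArg Prod.snd (Set.mem_singleton_iff.mp hur)
        simp only at h1 h2
        subst h1; subst h2
        simpa using hmat
      obtain ⟨s₁, p₁, f₁, v₁, q₁, h1, h2, h3, h4, h5⟩ :=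
        track_output hc hw hWF hpv hL _ _ _ Node.root le_rfl _ _ _ hgoal htrue
      refine ⟨s₁, p₁, f₁, v₁, q₁, h1, h2, h3, h4, ?_⟩
      simpa using h5.symm
    · -- px = r₀ ++ [i] : find the node inspecting r₀, then descend with the
      -- fresh goal for ℓx and track it to an output node.
      have hdom₀ : r₀ ∈ Dom t := isSome_of_append hdom
      obtain ⟨s₁, p₁, hn₁, heq₁⟩ := inspect_all hc hw hWF hpv hL hpats r₀ hdom₀
      obtain ⟨v, hv⟩ := Option.isSome_iff_exists.mp hdom₀
      obtain ⟨f, ts, hveq⟩ : ∃ f ts, v = Tm.app f ts := by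
        cases v with
        | var => exact absurd rfl (hc _ _ hv)
        | app f ts => exact ⟨f, ts, rfl⟩
      have hf : hd v = some f := by rw [hveq]; rfl
      have hlen : ts.length = ar f := by
        have hwv := wf_subterm hw hv
        rw [hveq] at hwv; cases hwv; assumption
      have hi : (i : ℕ) ≤ ar f := by
        have h1 : (subtermAt t (r₀ ++ [i])).isSome := hdom
        rw [subtermAt_append, hv, Option.bind_some, hveq, subtermAt_child] at h1
        cases hg : ts[(i : ℕ) - 1]? with
        | none => rw [hg] at h1; simp at h1
        | some u =>
            have h3 : (i : ℕ) - 1 < ar f := by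
              rw [← hlen]; exact (List.getElem?_eq_some_iff.mp hg).1
            have h2 : 0 < (i : ℕ) := i.2
            omega
      have hv₁ : subtermAt t (p₁ ++ L s₁) = some v := by rw [heq₁]; exact hv
      have hg₁X := fresh_mem_deriv (s := s₁) (lab := L s₁) hpat hi
      obtain ⟨K, g₀, hKcl, hg₁K, hgcp, hδ, hn'⟩ := descend hn₁ hv₁ hf hg₁X
      obtain ⟨hI, -, -⟩ := node_inv hw hWF hpv hL hn₁
      have hKgood : ∀ g ∈ K, Good pats t p₁ g := fun g hg =>
        deriv_good hw hWF hpv hI hv₁ hf g (class_subset hKcl hg)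
      have htrue₁ : TrueO t p₁ ({(ℓx, L s₁ ++ [i])} : Obl F) := by
        rintro u r hur
        have h1 := congrArg Prod.fst (Set.mem_singleton_iff.mp hur)
        have h2 := congrArg Prod.snd (Set.mem_singleton_iff.mp hur)
        simp only at h1 h2
        subst h1; subst h2
        have : p₁ ++ (L s₁ ++ [i]) = r₀ ++ [i] := by
          rw [← List.append_assoc, heq₁]
        rwa [this]
      obtain ⟨mo', q', hmem', htrue', hq⟩ := lift_track hKgood hgcp hg₁K htrue₁
      obtain ⟨s₂, p₂, f₂, v₂, q₂, h1, h2, h3, h4, h5⟩ :=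
        track_output hc hw hWF hpv hL _ _ _ hn' le_rfl _ _ _ hmem' htrue'
      refine ⟨s₂, p₂, f₂, v₂, q₂, h1, h2, h3, h4, ?_⟩
      rw [h5, List.append_assoc, hq, ← List.append_assoc, heq₁]
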